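/- Fix integers n ≥ 2 and d ≥ 2, and consider the system F of n+1 tropical polynomials over ℝ∞ in the n+1 variables x_1, …, x_n, y given by f_1 = min(x_1 + y, 0); f_{i+1} = min(d·x_i, x_{i+1}) for 1 ≤ i ≤ n−1; and f_{n+1} = min(d·x_{n−1}, 1 + x_n). Then F has no root in ℝ∞^{n+1}, yet the non-homogeneous Macaulay tropical linear system M_N ⊙ (0, z) of F with N = d^{n−1} − 1 has a solution. -/

import Mathlib

open scoped Classical

/-- Exponent vectors in `n` variables. -/
abbrev Exp (n : ℕ) : Type := Fin n → ℕ

/-- The total degree `|I|` of an exponent vector. -/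
def expDeg {n : ℕ} (I : Exp n) : ℕ := ∑ j, I j

/-- A tropical polynomial: a finite nonempty support of exponent vectors
together with real coefficients. -/
structure TropPoly (n : ℕ) where
  supp : Finset (Exp n)
  supp_nonempty : supp.Nonempty
  coeff : Exp n → ℝ

/-- The degree of a tropical polynomial. -/
def TropPoly.deg {n : ℕ} (f : TropPoly n) : ℕ := f.supp.sup expDeg

/-- Value of the monomial of `f` with exponent `I` at a point of `ℝ^n`. -/
def TropPoly.mono {n : ℕ} (f : TropPoly n) (I : Exp n) (a : Fin n → ℝ) : ℝ :=
  f.coeff I + ∑ j, (I j : ℝ) * a j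

/-- Value of a tropical polynomial at a point of `ℝ^n`. -/
def TropPoly.eval {n : ℕ} (f : TropPoly n) (a : Fin n → ℝ) : ℝ :=
  f.supp.inf' f.supp_nonempty (fun I => f.mono I a)

/-- A point of `ℝ^n` is a root if the minimum is attained at two distinct monomials. -/
def TropPoly.IsRoot {n : ℕ} (f : TropPoly n) (a : Fin n → ℝ) : Prop :=
  ∃ I ∈ f.supp, ∃ J ∈ f.supp, I ≠ J ∧
    f.mono I a = f.eval a ∧ f.mono J a = f.eval a

/-- Value of the monomial of `f` with exponent `I` at a point of `ℝ∞^n`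
(with the convention `0 • ⊤ = 0`). -/
noncomputable def TropPoly.monoT {n : ℕ} (f : TropPoly n) (I : Exp n)
    (a : Fin n → WithTop ℝ) : WithTop ℝ :=
  (f.coeff I : WithTop ℝ) + ∑ j, (I j) • a j

/-- Value of a tropical polynomial at a point of `ℝ∞^n`. -/
noncomputable def TropPoly.evalT {n : ℕ} (f : TropPoly n) (a : Fin n → WithTop ℝ) : WithTop ℝ :=
  f.supp.inf (fun I => f.monoT I a)

/-- A point of `ℝ∞^n` is a root if the minimum is `+∞` or is attained at two
distinct monomials. -/
noncomputable def TropPoly.IsRootT {n : ℕ} (f : TropPoly n) (a : Fin n → WithTop ℝ) : Prop :=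
  f.evalT a = ⊤ ∨ ∃ I ∈ f.supp, ∃ J ∈ f.supp, I ≠ J ∧
    f.monoT I a = f.evalT a ∧ f.monoT J a = f.evalT a

/-- The coefficient of the monomial `x^I` in `x^J ⊙ f`, which is `+∞`
unless `I - J` belongs to the support of `f`. -/
noncomputable def shiftCoeff {n : ℕ} (f : TropPoly n) (J I : Exp n) : WithTop ℝ :=
  if J ≤ I ∧ I - J ∈ f.supp then (f.coeff (I - J) : WithTop ℝ) else ⊤

/-- The entry `c_{f}(I-J) + y_I` of the Macaulay system. -/
noncomputable def macVal {n : ℕ} (f : TropPoly n) (J : Exp n)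
    (y : Exp n → WithTop ℝ) (I : Exp n) : WithTop ℝ :=
  shiftCoeff f J I + y I

/-- `y` is a solution of the Macaulay tropical linear system of `F` over `ℝ∞`:
for every `j` and every `J` with `|J| + deg f_j ≤ N`, the minimum over all `I` with
`|I| ≤ N` of `c_{f_j}(I-J) + y_I` either equals `+∞` or is attained for at least two
distinct `I`. -/
noncomputable def IsMacaulaySolT {n k : ℕ} (F : Fin k → TropPoly n) (N : ℕ)
    (y : Exp n → WithTop ℝ) : Prop :=
  ∀ j : Fin k, ∀ J : Exp n, expDeg J + (F j).deg ≤ N →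
    (∀ I : Exp n, expDeg I ≤ N → macVal (F j) J y I = ⊤) ∨
    ∃ I₁ I₂ : Exp n, I₁ ≠ I₂ ∧ expDeg I₁ ≤ N ∧ expDeg I₂ ≤ N ∧
      macVal (F j) J y I₁ = macVal (F j) J y I₂ ∧
      ∀ I : Exp n, expDeg I ≤ N → macVal (F j) J y I₁ ≤ macVal (F j) J y I

/-- The system `f_1 = min(x_1 + y, 0)`, `f_{i+1} = min(d·x_i, x_{i+1})` for
`1 ≤ i ≤ n-1`, and `f_{n+1} = min(d·x_{n-1}, 1 + x_n)`, as a family of `n+1` tropical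
polynomials in the `n+1` variables `x_1, …, x_n, y` (the variable `y` having index `n`).
-/
noncomputable def lbSysInf (n d : ℕ) (hn : 2 ≤ n) : Fin (n + 1) → TropPoly (n + 1) :=
  fun j =>
  if h0 : j.val = 0 then
    { supp := {Pi.single (⟨0, by omega⟩ : Fin (n + 1)) 1 +
                 Pi.single (⟨n, by omega⟩ : Fin (n + 1)) 1, 0},
      supp_nonempty := Finset.insert_nonempty _ _,
      coeff := fun _ => 0 }
  else if hjn : j.val = n then
    { supp := {Pi.single (⟨n - 2, by omega⟩ : Fin (n + 1)) d,
               Pi.single (⟨n - 1, by omega⟩ : Fin (n + 1)) 1},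
      supp_nonempty := Finset.insert_nonempty _ _,
      coeff := fun I => if I = Pi.single (⟨n - 1, by omega⟩ : Fin (n + 1)) 1 then 1 else 0 }
  else
    { supp := {Pi.single (⟨j.val - 1, by have := j.isLt; omega⟩ : Fin (n + 1)) d,
               Pi.single (⟨j.val, by have := j.isLt; omega⟩ : Fin (n + 1)) 1},
      supp_nonempty := Finset.insert_nonempty _ _,
      coeff := fun _ => 0 }

section AuxLemmas

variable {m : ℕ}

lemma expDeg_add (I J : Exp m) : expDeg (I + J) = expDeg I + expDeg J := by
  simp [expDeg, Finset.sum_add_distrib]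

lemma expDeg_single (i : Fin m) (c : ℕ) : expDeg (Pi.single i c) = c := by
  simp [expDeg]

lemma comp_le_expDeg (I : Exp m) (i : Fin m) : I i ≤ expDeg I :=
  Finset.single_le_sum (fun _ _ => Nat.zero_le _) (Finset.mem_univ i)

lemma sum_single_smul (i : Fin m) (c : ℕ) (a : Fin m → WithTop ℝ) :
    ∑ j, (Pi.single i c : Exp m) j • a j = c • a i := by
  rw [Finset.sum_eq_single i]
  · simp
  · intro b _ hb; rw [Pi.single_eq_of_ne hb, zero_nsmul]
  · simp

lemma sum_two_single_smul (i k : Fin m) (c e : ℕ) (a : Fin m → WithTop ℝ) :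
    ∑ j, ((Pi.single i c + Pi.single k e : Exp m) j) • a j = c • a i + e • a k := by
  simp only [Pi.add_apply, add_nsmul, Finset.sum_add_distrib, sum_single_smul]

lemma nsmul_ne_top' (k : ℕ) {x : WithTop ℝ} (hx : x ≠ ⊤) : k • x ≠ ⊤ := by
  induction k with
  | zero => simp
  | succ k ih => rw [succ_nsmul]; exact WithTop.add_ne_top.2 ⟨ih, hx⟩

lemma rootT_pair (f : TropPoly m) (s₁ s₂ : Exp m) (hsupp : f.supp = {s₁, s₂})
    (a : Fin m → WithTop ℝ) (hr : f.IsRootT a) : f.monoT s₁ a = f.monoT s₂ a := by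
  have heval : f.evalT a = f.monoT s₁ a ⊓ f.monoT s₂ a := by
    rw [TropPoly.evalT, hsupp]; simp
  rcases hr with h | ⟨I, hI, J, hJ, hne, h1, h2⟩
  · rw [heval, inf_eq_top_iff] at h; rw [h.1, h.2]
  · rw [hsupp] at hI hJ
    simp only [Finset.mem_insert, Finset.mem_singleton] at hI hJ
    rcases hI with rfl | rfl <;> rcases hJ with rfl | rfl
    · exact absurd rfl hne
    · rw [h1, h2]
    · rw [h2, h1]
    · exact absurd rfl hne

lemma mac_pair {N : ℕ} (f : TropPoly m) (s₁ s₂ : Exp m) (hsupp : f.supp = {s₁, s₂})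
    (hne : s₁ ≠ s₂) (y : Exp m → WithTop ℝ) (J : Exp m) (hJ : expDeg J + f.deg ≤ N)
    (heq : (f.coeff s₁ : WithTop ℝ) + y (J + s₁) = (f.coeff s₂ : WithTop ℝ) + y (J + s₂)) :
    (∀ I : Exp m, expDeg I ≤ N → macVal f J y I = ⊤) ∨
    ∃ I₁ I₂ : Exp m, I₁ ≠ I₂ ∧ expDeg I₁ ≤ N ∧ expDeg I₂ ≤ N ∧
      macVal f J y I₁ = macVal f J y I₂ ∧
      ∀ I : Exp m, expDeg I ≤ N → macVal f J y I₁ ≤ macVal f J y I := by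
  have hmem₁ : s₁ ∈ f.supp := by rw [hsupp]; exact Finset.mem_insert_self _ _
  have hmem₂ : s₂ ∈ f.supp := by rw [hsupp]; simp
  have hval : ∀ s ∈ f.supp, macVal f J y (J + s) = (f.coeff s : WithTop ℝ) + y (J + s) := by
    intro s hs
    have h1 : J ≤ J + s := fun i => Nat.le_add_right _ _
    have h2 : J + s - J = s := by funext i; simp
    rw [macVal, shiftCoeff, if_pos ⟨h1, by rw [h2]; exact hs⟩, h2]
  have htop : ∀ I : Exp m, I ≠ J + s₁ → I ≠ J + s₂ → macVal f J y I = ⊤ := by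
    intro I hI1 hI2
    rw [macVal, shiftCoeff, if_neg, top_add]
    rintro ⟨hle, hmem⟩
    have hI : I = J + (I - J) := by funext i; exact (Nat.add_sub_cancel' (hle i)).symm
    rw [hsupp] at hmem
    simp only [Finset.mem_insert, Finset.mem_singleton] at hmem
    rcases hmem with h | h
    · exact hI1 (by rw [hI, h])
    · exact hI2 (by rw [hI, h])
  have hd1 : expDeg (J + s₁) ≤ N := by
    rw [expDeg_add]; exact le_trans (Nat.add_le_add_left (Finset.le_sup hmem₁) _) hJ
  have hd2 : expDeg (J + s₂) ≤ N := by
    rw [expDeg_add]; exact le_trans (Nat.add_le_add_left (Finset.le_sup hmem₂) _) hJ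
  right
  refine ⟨J + s₁, J + s₂, ?_, hd1, hd2, ?_, ?_⟩
  · intro h; exact hne (add_left_cancel h)
  · rw [hval s₁ hmem₁, hval s₂ hmem₂]; exact heq
  · intro I hI
    by_cases h1 : I = J + s₁
    · rw [h1]
    by_cases h2 : I = J + s₂
    · rw [h2, hval s₁ hmem₁, hval s₂ hmem₂, heq]
    · rw [htop I h1 h2]; exact le_top

end AuxLemmas

section LbAux

lemma lbSysInf_eq_zero (n d : ℕ) (hn : 2 ≤ n) (j : Fin (n + 1)) (hj : j.val = 0) :
    lbSysInf n d hn j =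
      ⟨{Pi.single (⟨0, by omega⟩ : Fin (n + 1)) 1 + Pi.single (⟨n, by omega⟩ : Fin (n + 1)) 1, 0},
        Finset.insert_nonempty _ _, fun _ => 0⟩ := by
  simp only [lbSysInf]; rw [dif_pos hj]

lemma lbSysInf_eq_mid (n d : ℕ) (hn : 2 ≤ n) (j : Fin (n + 1)) (h0 : ¬ j.val = 0)
    (hjn : ¬ j.val = n) :
    lbSysInf n d hn j =
      ⟨{Pi.single (⟨j.val - 1, by have := j.isLt; omega⟩ : Fin (n + 1)) d,
        Pi.single (⟨j.val, by have := j.isLt; omega⟩ : Fin (n + 1)) 1},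
        Finset.insert_nonempty _ _, fun _ => 0⟩ := by
  simp only [lbSysInf]; rw [dif_neg h0, dif_neg hjn]

lemma lbSysInf_eq_last (n d : ℕ) (hn : 2 ≤ n) (j : Fin (n + 1)) (hj : j.val = n) :
    lbSysInf n d hn j =
      ⟨{Pi.single (⟨n - 2, by omega⟩ : Fin (n + 1)) d,
        Pi.single (⟨n - 1, by omega⟩ : Fin (n + 1)) 1},
        Finset.insert_nonempty _ _,
        fun I => if I = Pi.single (⟨n - 1, by omega⟩ : Fin (n + 1)) 1 then 1 else 0⟩ := by
  simp only [lbSysInf]; rw [dif_neg (by omega), dif_pos hj]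

/-- weight of variable `i`: `d^i` for the `x`-variables, `0` for `y`. -/
def wgtV (n d : ℕ) (i : Fin (n + 1)) : ℕ := if (i : ℕ) < n then d ^ (i : ℕ) else 0

/-- weighted degree of an exponent vector. -/
def wgt (n d : ℕ) (I : Exp (n + 1)) : ℕ := ∑ i, I i * wgtV n d i

lemma wgt_add (n d : ℕ) (I J : Exp (n + 1)) : wgt n d (I + J) = wgt n d I + wgt n d J := by
  simp [wgt, add_mul, Finset.sum_add_distrib]

lemma wgt_single (n d : ℕ) (i : Fin (n + 1)) (c : ℕ) :
    wgt n d (Pi.single i c) = c * wgtV n d i := by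
  rw [wgt, Finset.sum_eq_single i]
  · simp
  · intro b _ hb; rw [Pi.single_eq_of_ne hb, zero_mul]
  · simp

/-- The Macaulay solution. -/
noncomputable def ySol (n d : ℕ) (I : Exp (n + 1)) : WithTop ℝ :=
  if wgt n d I = I (Fin.last n) then 0 else ⊤

lemma ySol_add_single (n d : ℕ) (J : Exp (n + 1)) (i : Fin (n + 1)) (c : ℕ) (h : (i : ℕ) < n) :
    ySol n d (J + Pi.single i c) =
      if wgt n d J + c * d ^ (i : ℕ) = J (Fin.last n) then 0 else ⊤ := by
  have hne : Fin.last n ≠ i := by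
    intro he; rw [← he] at h; simp at h
  have h1 : (J + Pi.single i c : Exp (n + 1)) (Fin.last n) = J (Fin.last n) := by
    rw [Pi.add_apply, Pi.single_eq_of_ne hne, add_zero]
  have h2 : wgtV n d i = d ^ (i : ℕ) := by rw [wgtV, if_pos h]
  rw [ySol, wgt_add, wgt_single, h1, h2]

end LbAux

section YSolAux

lemma ySol_add_single' (n d : ℕ) (J : Exp (n + 1)) (i : Fin (n + 1)) (c e : ℕ)
    (h : (i : ℕ) < n) (he : (i : ℕ) = e) :
    ySol n d (J + Pi.single i c) =
      if wgt n d J + c * d ^ e = J (Fin.last n) then 0 else ⊤ := by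
  subst he; exact ySol_add_single n d J i c h

lemma ySol_f1 (n d : ℕ) (hn : 2 ≤ n) (J : Exp (n + 1)) :
    ySol n d (J + (Pi.single (⟨0, by omega⟩ : Fin (n + 1)) 1 +
      Pi.single (⟨n, by omega⟩ : Fin (n + 1)) 1)) = ySol n d J := by
  rw [ySol, ySol, wgt_add, wgt_add, wgt_single, wgt_single]
  have hv0 : wgtV n d (⟨0, by omega⟩ : Fin (n + 1)) = 1 := by
    rw [wgtV, if_pos (show (0 : ℕ) < n by omega)]; exact pow_zero d
  have hvn : wgtV n d (⟨n, by omega⟩ : Fin (n + 1)) = 0 := by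
    rw [wgtV, if_neg (show ¬ (n : ℕ) < n by omega)]
  rw [hv0, hvn]
  have hl : (J + (Pi.single (⟨0, by omega⟩ : Fin (n + 1)) 1 +
      Pi.single (⟨n, by omega⟩ : Fin (n + 1)) 1) : Exp (n + 1)) (Fin.last n)
      = J (Fin.last n) + 1 := by
    rw [Pi.add_apply, Pi.add_apply,
      Pi.single_eq_of_ne (Fin.ne_of_val_ne (show (n : ℕ) ≠ 0 by omega)),
      show (Fin.last n) = (⟨n, by omega⟩ : Fin (n + 1)) from rfl, Pi.single_eq_same]
  rw [hl]
  simp only [mul_one, mul_zero, add_zero]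
  exact if_congr (by omega) rfl rfl

end YSolAux

/-- **Lower bound over ℝ∞** : for all `n, d ≥ 2` the system `F = lbSysInf n d` of `n+1`
tropical polynomials of degree at most `d` in `n+1` variables has no root in `ℝ∞^{n+1}`,
yet its non-homogeneous Macaulay tropical linear system `M_N ⊙ (0, z)` with
`N = d^{n-1} - 1` has a solution. -/
theorem tropical_nullstellensatz_lower_bound_inf (n d : ℕ) (hn : 2 ≤ n) (hd : 2 ≤ d) :
    (¬ ∃ a : Fin (n + 1) → WithTop ℝ, ∀ j : Fin (n + 1), (lbSysInf n d hn j).IsRootT a) ∧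
    (∃ y : Exp (n + 1) → WithTop ℝ, y 0 = 0 ∧
      IsMacaulaySolT (lbSysInf n d hn) (d ^ (n - 1) - 1) y) := by
  constructor
  · rintro ⟨a, ha⟩
    have key1 : a ⟨0, by omega⟩ + a ⟨n, by omega⟩ = 0 := by
      have hf := lbSysInf_eq_zero n d hn ⟨0, by omega⟩ rfl
      have h := rootT_pair (lbSysInf n d hn ⟨0, by omega⟩)
          (Pi.single (⟨0, by omega⟩ : Fin (n + 1)) 1 + Pi.single (⟨n, by omega⟩ : Fin (n + 1)) 1)
          0 (by rw [hf]) a (ha _)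
      rw [hf] at h
      simp only [TropPoly.monoT, sum_two_single_smul, one_nsmul, Pi.zero_apply, zero_nsmul,
        Finset.sum_const_zero, WithTop.coe_zero, zero_add, add_zero] at h
      exact h
    have ha0 : a ⟨0, by omega⟩ ≠ ⊤ := by
      intro h; rw [h, top_add] at key1; exact absurd key1 (by simp)
    have hmid : ∀ m : ℕ, (h1 : 1 ≤ m) → (h2 : m ≤ n - 1) →
        d • a ⟨m - 1, by omega⟩ = a ⟨m, by omega⟩ := by
      intro m h1 h2
      have hf := lbSysInf_eq_mid n d hn ⟨m, by omega⟩ (show ¬ m = 0 by omega)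
        (show ¬ m = n by omega)
      have h := rootT_pair (lbSysInf n d hn ⟨m, by omega⟩)
          (Pi.single (⟨m - 1, by omega⟩ : Fin (n + 1)) d)
          (Pi.single (⟨m, by omega⟩ : Fin (n + 1)) 1)
          (by rw [hf]) a (ha _)
      rw [hf] at h
      simp only [TropPoly.monoT, sum_single_smul, one_nsmul, WithTop.coe_zero, zero_add] at h
      exact h
    have hfin : ∀ m : ℕ, (hm : m ≤ n - 1) → a ⟨m, by omega⟩ ≠ ⊤ := by
      intro m
      induction m with
      | zero => intro _; exact ha0
      | succ k ih =>
        intro hk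
        have h := hmid (k + 1) (by omega) hk
        rw [← h]
        exact nsmul_ne_top' d (ih (by omega))
    have hlast : d • a ⟨n - 2, by omega⟩ = 1 + a ⟨n - 1, by omega⟩ := by
      have hf := lbSysInf_eq_last n d hn ⟨n, by omega⟩ rfl
      have h := rootT_pair (lbSysInf n d hn ⟨n, by omega⟩)
          (Pi.single (⟨n - 2, by omega⟩ : Fin (n + 1)) d)
          (Pi.single (⟨n - 1, by omega⟩ : Fin (n + 1)) 1)
          (by rw [hf]) a (ha _)
      rw [hf] at h
      have hcne : (Pi.single (⟨n - 2, by omega⟩ : Fin (n + 1)) d : Exp (n + 1))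
          ≠ Pi.single (⟨n - 1, by omega⟩ : Fin (n + 1)) 1 := by
        intro hc
        have h2 := congrFun hc ⟨n - 2, by omega⟩
        rw [Pi.single_eq_same,
          Pi.single_eq_of_ne (Fin.ne_of_val_ne (show n - 2 ≠ n - 1 by omega))] at h2
        omega
      simp [TropPoly.monoT, sum_single_smul, hcne] at h
      simpa using h
    have hm := hmid (n - 1) (by omega) le_rfl
    have hidx : (⟨n - 1 - 1, by omega⟩ : Fin (n + 1)) = ⟨n - 2, by omega⟩ := by
      simp only [Fin.mk.injEq]; omega
    rw [hidx] at hm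
    rw [hm] at hlast
    obtain ⟨r, hr⟩ := WithTop.ne_top_iff_exists.mp (hfin (n - 1) le_rfl)
    rw [← hr, ← WithTop.coe_one, ← WithTop.coe_add] at hlast
    have := WithTop.coe_eq_coe.mp hlast
    linarith
  · refine ⟨ySol n d, ?_, ?_⟩
    · simp [ySol, wgt]
    · intro j J hJ
      by_cases h0 : j.val = 0
      · have hf := lbSysInf_eq_zero n d hn j h0
        refine mac_pair (lbSysInf n d hn j)
          (Pi.single (⟨0, by omega⟩ : Fin (n + 1)) 1 + Pi.single (⟨n, by omega⟩ : Fin (n + 1)) 1)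
          0 (by rw [hf]) ?_ (ySol n d) J hJ ?_
        · intro hc
          have h2 := congrFun hc ⟨0, by omega⟩
          rw [Pi.add_apply, Pi.single_eq_same,
            Pi.single_eq_of_ne (Fin.ne_of_val_ne (show (0 : ℕ) ≠ n by omega)),
            Pi.zero_apply] at h2
          omega
        · rw [hf, add_zero]
          simp only [WithTop.coe_zero, zero_add]
          exact ySol_f1 n d hn J
      · by_cases hjn : j.val = n
        · have hf := lbSysInf_eq_last n d hn j hjn
          have hdeg : (lbSysInf n d hn j).deg = d := by
            rw [hf, TropPoly.deg, Finset.sup_insert, Finset.sup_singleton,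
              expDeg_single, expDeg_single]
            exact max_eq_left (by omega)
          have hJd : expDeg J + d ≤ d ^ (n - 1) - 1 := by rw [hdeg] at hJ; exact hJ
          have hcomp := comp_le_expDeg J (Fin.last n)
          have hpow : 1 ≤ d ^ (n - 1) := Nat.one_le_pow _ _ (by omega)
          have hT1 : ySol n d (J + Pi.single (⟨n - 2, by omega⟩ : Fin (n + 1)) d) = ⊤ := by
            rw [ySol_add_single' n d J _ d (n - 2) (show n - 2 < n by omega) rfl, if_neg]
            intro hc
            have h2 : d * d ^ (n - 2) = d ^ (n - 1) := by
              rw [mul_comm, ← pow_succ]; congr 1; omega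
            rw [h2] at hc
            omega
          have hT2 : ySol n d (J + Pi.single (⟨n - 1, by omega⟩ : Fin (n + 1)) 1) = ⊤ := by
            rw [ySol_add_single' n d J _ 1 (n - 1) (show n - 1 < n by omega) rfl, if_neg]
            intro hc
            rw [one_mul] at hc
            omega
          refine mac_pair (lbSysInf n d hn j)
            (Pi.single (⟨n - 2, by omega⟩ : Fin (n + 1)) d)
            (Pi.single (⟨n - 1, by omega⟩ : Fin (n + 1)) 1)
            (by rw [hf]) ?_ (ySol n d) J hJ ?_
          · intro hc
            have h2 := congrFun hc ⟨n - 2, by omega⟩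
            rw [Pi.single_eq_same,
              Pi.single_eq_of_ne (Fin.ne_of_val_ne (show n - 2 ≠ n - 1 by omega))] at h2
            omega
          · rw [hf]
            simp only [hT1, hT2, add_top]
        · have hlt := j.isLt
          have hf := lbSysInf_eq_mid n d hn j h0 hjn
          refine mac_pair (lbSysInf n d hn j)
            (Pi.single (⟨j.val - 1, by omega⟩ : Fin (n + 1)) d)
            (Pi.single (⟨j.val, by omega⟩ : Fin (n + 1)) 1)
            (by rw [hf]) ?_ (ySol n d) J hJ ?_
          · intro hc
            have h2 := congrFun hc ⟨j.val - 1, by omega⟩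
            rw [Pi.single_eq_same,
              Pi.single_eq_of_ne (Fin.ne_of_val_ne (show j.val - 1 ≠ j.val by omega))] at h2
            omega
          · rw [hf]
            simp only [WithTop.coe_zero, zero_add]
            rw [ySol_add_single' n d J _ d (j.val - 1) (show j.val - 1 < n by omega) rfl,
              ySol_add_single' n d J _ 1 (j.val) (show j.val < n by omega) rfl]
            have hp : d * d ^ (j.val - 1) = 1 * d ^ j.val := by
              rw [one_mul, mul_comm, ← pow_succ]; congr 1; omega
            rw [hp]
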